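/- (Cartan–Dieudonné.) Let k be a field of characteristic ≠ 2 and (V,Q) a finite-dimensional nondegenerate quadratic space over k. For x ∈ V with Q(x) ≠ 0 let τ_x : V → V be the reflection τ_x(y) = y − (B(y,x)/Q(x))·x. Then every isometry σ of (V,Q) onto itself is a composition of finitely many reflections τ_x with Q(x) ≠ 0; moreover, σ can be written as a composition of an even number of such reflections if and only if det σ = 1. -/

import Mathlib

/-- The reflection `τ_x(y) = y − (B(y,x)/Q(x)) x` in the hyperplane orthogonal to `x`,
where `B` is the polar bilinear form of the quadratic form `Q`. -/
noncomputable def quadraticReflection {k V : Type*} [Field k] [AddCommGroup V] [Module k V]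
    (Q : QuadraticForm k V) (x : V) : V →ₗ[k] V :=
  LinearMap.id - (Q x)⁻¹ • (((QuadraticMap.polarBilin Q).flip x).smulRight x)

namespace CartanAux

open Module QuadraticMap LinearMap Submodule

variable {k V : Type*} [Field k] [AddCommGroup V] [Module k V]
variable (Q : QuadraticForm k V)

lemma qr_apply (x y : V) :
    quadraticReflection Q x y = y - ((Q x)⁻¹ * polar Q y x) • x := by
  simp [quadraticReflection, smul_smul]

lemma map_add' (a b : V) : Q (a + b) = Q a + Q b + polar Q a b := by
  simp only [QuadraticMap.polar]
  ring

lemma qr_isometry {x : V} (hx : Q x ≠ 0) (y : V) :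
    Q (quadraticReflection Q x y) = Q y := by
  rw [qr_apply, sub_eq_add_neg, map_add', ← smul_neg, QuadraticMap.map_smul,
    polar_smul_right, polar_neg_right]
  have h2 : Q (-x) = Q x := by rw [QuadraticMap.map_neg]
  rw [h2]
  field_simp
  have hxi : Q x * (Q x)⁻¹ = 1 := mul_inv_cancel₀ hx
  linear_combination (polar Q y x ^ 2 * (Q x)⁻¹) * hxi

lemma qr_self {x : V} (hx : Q x ≠ 0) :
    quadraticReflection Q x x = -x := by
  rw [qr_apply, polar_self, two_nsmul, ← two_mul]
  have h : (Q x)⁻¹ * (2 * Q x) = 2 := by field_simp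
  rw [h, two_smul]
  abel

lemma qr_ortho {x y : V} (h : polar Q y x = 0) :
    quadraticReflection Q x y = y := by
  rw [qr_apply, h, mul_zero, zero_smul, sub_zero]

lemma qr_invol {x : V} (hx : Q x ≠ 0) :
    quadraticReflection Q x ∘ₗ quadraticReflection Q x = LinearMap.id := by
  ext y
  simp only [LinearMap.comp_apply, LinearMap.id_apply]
  have hp : polar Q (quadraticReflection Q x y) x = - polar Q y x := by
    rw [qr_apply, polar_sub_left, polar_smul_left, polar_self, smul_eq_mul,
      two_nsmul, ← two_mul]
    field_simp
    ring
  rw [qr_apply Q x (quadraticReflection Q x y), hp, qr_apply, mul_neg, neg_smul,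
    sub_neg_eq_add]
  abel

/-- `quadraticReflection` as a linear equivalence. -/
noncomputable def qrEquiv {x : V} (hx : Q x ≠ 0) : V ≃ₗ[k] V :=
  LinearEquiv.ofLinear (quadraticReflection Q x) (quadraticReflection Q x)
    (qr_invol Q hx) (qr_invol Q hx)

@[simp] lemma qrEquiv_coe {x : V} (hx : Q x ≠ 0) :
    (qrEquiv Q hx : V →ₗ[k] V) = quadraticReflection Q x := rfl

lemma polar_map_isometry (σ : V →ₗ[k] V) (hσ : ∀ y, Q (σ y) = Q y) (u v : V) :
    polar Q (σ u) (σ v) = polar Q u v := by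
  simp [QuadraticMap.polar, ← map_add, hσ]

lemma polar_map_isometry' (σ : V ≃ₗ[k] V) (hσ : ∀ y, Q (σ y) = Q y) (u v : V) :
    polar Q (σ u) (σ v) = polar Q u v := by
  simp [QuadraticMap.polar, ← map_add, hσ]


lemma det_eq_prod_eigen [FiniteDimensional k V] {ι : Type*} [Fintype ι] [DecidableEq ι]
    (b : Basis ι k V) (μ : ι → k) (f : V →ₗ[k] V) (h : ∀ i, f (b i) = μ i • b i) :
    LinearMap.det f = ∏ i, μ i := by
  rw [← LinearMap.det_toMatrix b]
  have hm : LinearMap.toMatrix b b f = Matrix.diagonal μ := by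
    ext i j
    rw [LinearMap.toMatrix_apply, h j, _root_.map_smul]
    simp only [Matrix.diagonal, Finsupp.single_apply, Finsupp.smul_single,
      Basis.repr_self, Finsupp.smul_apply, smul_eq_mul, Matrix.of_apply]
    rcases eq_or_ne i j with rfl | hij
    · simp
    · simp [hij, Ne.symm hij]
  rw [hm, Matrix.det_diagonal]

lemma two_qx_ne_zero (hchar : (2:k) ≠ 0) {x : V} (hx : Q x ≠ 0) :
    polar Q x x ≠ 0 := by
  rw [polar_self, two_nsmul, ← two_mul]
  exact mul_ne_zero hchar hx

lemma x_ne_zero {x : V} (hx : Q x ≠ 0) : x ≠ 0 :=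
  fun h => hx (h ▸ map_zero Q)

lemma mem_orthogonal_polar_eq_zero {x : V} {w : V}
    (hw : w ∈ LinearMap.BilinForm.orthogonal (polarBilin Q) (k ∙ x)) : polar Q x w = 0 := by
  have := (LinearMap.BilinForm.mem_orthogonal_iff.mp hw) x (Submodule.mem_span_singleton_self x)
  simpa [LinearMap.BilinForm.IsOrtho] using this

lemma qr_det [FiniteDimensional k V] (hchar : (2:k) ≠ 0) {x : V} (hx : Q x ≠ 0) :
    LinearMap.det (quadraticReflection Q x) = -1 := by
  have hxx : ¬ LinearMap.IsOrtho (polarBilin Q) x x := fun h =>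
    two_qx_ne_zero Q hchar hx h
  have hc := LinearMap.BilinForm.isCompl_span_singleton_orthogonal hxx
  set W := LinearMap.BilinForm.orthogonal (polarBilin Q) (k ∙ x) with hW
  have hli : ∀ c : k, ∀ w ∈ W, c • x + w = 0 → c = 0 := by
    intro c w hw hcw
    have h1 : c • x ∈ (k ∙ x) := Submodule.smul_mem _ _ (Submodule.mem_span_singleton_self x)
    have h2 : c • x ∈ W := by
      have : c • x = -w := by rw [eq_neg_iff_add_eq_zero]; exact hcw
      rw [this]; exact neg_mem hw
    have := Submodule.disjoint_def.mp hc.disjoint _ h1 h2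
    rcases smul_eq_zero.mp this with h | h
    · exact h
    · exact absurd h (x_ne_zero Q hx)
  have hsp : ∀ z : V, ∃ c : k, z + c • x ∈ W := by
    intro z
    have hz : z ∈ (k ∙ x) ⊔ W := hc.sup_eq_top ▸ Submodule.mem_top
    obtain ⟨a, ha, b, hb, rfl⟩ := Submodule.mem_sup.mp hz
    obtain ⟨c, rfl⟩ := Submodule.mem_span_singleton.mp ha
    exact ⟨-c, by simpa using hb⟩
  let bW := Module.finBasis k W
  let b := Basis.mkFinCons x bW hli hsp
  have hb0 : b 0 = x := by
    simp only [b, Basis.coe_mkFinCons]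
    rfl
  have hbs : ∀ i, b i.succ = (bW i : V) := by
    intro i
    simp only [b, Basis.coe_mkFinCons]
    rfl
  have hdet := det_eq_prod_eigen b (Fin.cons (-1) (fun _ => (1:k)))
    (quadraticReflection Q x) ?_
  · rw [hdet, Fin.prod_univ_succ]
    simp
  · intro i
    refine Fin.cases ?_ ?_ i
    · rw [hb0, Fin.cons_zero, qr_self Q hx, neg_one_smul]
    · intro j
      rw [hbs, Fin.cons_succ, one_smul]
      refine qr_ortho Q ?_
      rw [polar_comm]
      exact mem_orthogonal_polar_eq_zero Q (bW j).2

lemma prod_det [FiniteDimensional k V] (hchar : (2:k) ≠ 0) (l : List V)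
    (hl : ∀ x ∈ l, Q x ≠ 0) :
    LinearMap.det ((l.map (quadraticReflection Q)).prod) = (-1)^l.length := by
  rw [map_list_prod (LinearMap.det : (V →ₗ[k] V) →* k), List.map_map]
  rw [List.prod_eq_pow_card _ (-1 : k), List.length_map]
  intro y hy
  obtain ⟨x, hx, rfl⟩ := List.mem_map.mp hy
  exact qr_det Q hchar (hl x hx)


lemma qr_invol_apply {x : V} (hx : Q x ≠ 0) (y : V) :
    quadraticReflection Q x (quadraticReflection Q x y) = y :=
  DFunLike.congr_fun (qr_invol Q hx) y

universe u v

/-- A reflection in a vector of a submodule `W` restricts to the reflection of the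
restricted quadratic form. -/
lemma qr_coe_sub (W : Submodule k V) (w u : W) :
    quadraticReflection Q (w : V) (u : V) =
      ((quadraticReflection (Q.comp W.subtype) w u : W) : V) := by
  rw [qr_apply, qr_apply]
  push_cast
  rfl

lemma exists_list {k : Type u} [Field k] (hchar : (2:k) ≠ 0) :
    ∀ (n : ℕ) (V : Type v) [AddCommGroup V] [Module k V] [FiniteDimensional k V]
      (Q : QuadraticForm k V), (QuadraticMap.polarBilin Q).Nondegenerate →
      ∀ (σ : V ≃ₗ[k] V), (∀ x, Q (σ x) = Q x) → Module.finrank k V ≤ n →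
      ∃ l : List V, (∀ x ∈ l, Q x ≠ 0) ∧
        (σ : V →ₗ[k] V) = (l.map (quadraticReflection Q)).prod := by
  intro n
  induction n with
  | zero =>
    intro V _ _ _ Q hnd σ hσ hle
    have h0 : Module.finrank k V = 0 := Nat.le_zero.mp hle
    have hsub : Subsingleton V := Module.finrank_zero_iff.mp h0
    exact ⟨[], by simp, by ext v; exact Subsingleton.elim _ _⟩
  | succ n ih =>
    intro V _ _ _ Q hnd σ hσ hle
    rcases subsingleton_or_nontrivial V with hV | hV
    · exact ⟨[], by simp, by ext v; exact Subsingleton.elim _ _⟩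
    -- pick an anisotropic vector x
    haveI : Invertible (2:k) := invertibleOfNonzero hchar
    have hBsymm : (polarBilin Q).IsSymm := ⟨fun u v => polar_comm Q u v⟩
    have hB0 : polarBilin Q ≠ 0 := by
      intro h
      obtain ⟨u, hu⟩ := exists_ne (0:V)
      exact hu (hnd.1 u (fun m => by simp [h]))
    obtain ⟨x, hxx⟩ := LinearMap.BilinForm.exists_bilinForm_self_ne_zero hB0 hBsymm
    have hx : Q x ≠ 0 := by
      intro h0
      apply hxx
      show polarBilin Q x x = 0
      rw [polarBilin_apply_apply, polar_self, h0, smul_zero]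
    -- key reduction: an isometry fixing x is a product of reflections
    have key2 : ∀ (σ' : V ≃ₗ[k] V), (∀ y, Q (σ' y) = Q y) → σ' x = x →
        ∃ l : List V, (∀ y ∈ l, Q y ≠ 0) ∧
          (σ' : V →ₗ[k] V) = (l.map (quadraticReflection Q)).prod := by
      intro σ' hσ' hfix
      have hc := LinearMap.BilinForm.isCompl_span_singleton_orthogonal (B := polarBilin Q) hxx
      set W := LinearMap.BilinForm.orthogonal (polarBilin Q) (k ∙ x) with hWdef
      -- dimension count
      have hdim : Module.finrank k (k ∙ x) + Module.finrank k W = Module.finrank k V :=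
        Submodule.finrank_add_eq_of_isCompl hc
      rw [finrank_span_singleton (x_ne_zero Q hx)] at hdim
      have hWle : Module.finrank k W ≤ n := by omega
      -- the restricted quadratic form
      set Q' : QuadraticForm k W := Q.comp W.subtype with hQ'def
      have hnd' : (polarBilin Q').Nondegenerate := by
        have h1 := LinearMap.BilinForm.restrict_nondegenerate_orthogonal_spanSingleton
          (polarBilin Q) hnd hBsymm.isRefl hxx
        constructor
        · exact fun u hu => h1.1 u (fun v => hu v)
        · intro u hu
          refine h1.1 u (fun v => ?_)
          show polar Q' u v = 0
          rw [polar_comm]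
          exact hu v
      -- isometries fixing x preserve W
      have hpres : ∀ (τ : V ≃ₗ[k] V), (∀ y, Q (τ y) = Q y) → τ x = x →
          ∀ w ∈ W, τ w ∈ W := by
        intro τ hτ hτx w hw
        rw [hWdef, LinearMap.BilinForm.mem_orthogonal_iff]
        rintro u hu
        obtain ⟨c, rfl⟩ := Submodule.mem_span_singleton.mp hu
        show polar Q (c • x) (τ w) = 0
        rw [polar_smul_left]
        have hxw : polar Q x (τ w) = 0 := by
          conv_lhs => rw [← hτx]
          rw [polar_map_isometry' Q τ hτ x w]
          exact mem_orthogonal_polar_eq_zero Q hw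
        rw [hxw, smul_zero]
      have hsymm_iso : ∀ y, Q (σ'.symm y) = Q y := by
        intro y; conv_rhs => rw [← σ'.apply_symm_apply y, hσ']
      have hsymm_fix : σ'.symm x = x := by
        conv_lhs => rw [← hfix, σ'.symm_apply_apply]
      -- restrict σ' to an isometry of W
      let f : W →ₗ[k] W := ((σ' : V →ₗ[k] V).domRestrict W).codRestrict W
        (fun w => hpres σ' hσ' hfix w w.2)
      let g : W →ₗ[k] W := ((σ'.symm : V →ₗ[k] V).domRestrict W).codRestrict W
        (fun w => hpres σ'.symm hsymm_iso hsymm_fix w w.2)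
      have hfg : f ∘ₗ g = LinearMap.id := by
        ext w; exact σ'.apply_symm_apply w
      have hgf : g ∘ₗ f = LinearMap.id := by
        ext w; exact σ'.symm_apply_apply w
      let ρ : W ≃ₗ[k] W := LinearEquiv.ofLinear f g hfg hgf
      have hρ : ∀ w : W, ((ρ w : W) : V) = σ' (w : V) := fun w => rfl
      have hρiso : ∀ w, Q' (ρ w) = Q' w := by
        intro w
        show Q ((ρ w : W) : V) = Q (w : V)
        rw [hρ]; exact hσ' _
      obtain ⟨l', hl'A, hl'P⟩ := ih W Q' hnd' ρ hρiso hWle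
      -- lift the list to V
      refine ⟨l'.map (fun (w : W) => (w : V)), ?_, ?_⟩
      · intro y hy
        obtain ⟨w, hw, rfl⟩ := List.mem_map.mp hy
        exact hl'A w hw
      -- the lifted product agrees with σ' on x and on W
      have main : ∀ (m : List W), (∀ w ∈ m, Q' w ≠ 0) →
          (((m.map (fun (w : W) => (w : V))).map (quadraticReflection Q)).prod x = x ∧
           ∀ u : W, ((m.map (fun (w : W) => (w : V))).map (quadraticReflection Q)).prod (u : V) =
             (((m.map (quadraticReflection Q')).prod u : W) : V)) := by
        intro m
        induction m with
        | nil => intro _; simp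
        | cons w m ihm =>
          intro hm
          obtain ⟨ih1, ih2⟩ := ihm (fun u hu => hm u (List.mem_cons_of_mem _ hu))
          constructor
          · simp only [List.map_cons, List.prod_cons, Module.End.mul_apply]
            rw [ih1]
            exact qr_ortho Q (mem_orthogonal_polar_eq_zero Q w.2)
          · intro u
            simp only [List.map_cons, List.prod_cons, Module.End.mul_apply]
            rw [ih2, qr_coe_sub]
      obtain ⟨hmx, hmW⟩ := main l' hl'A
      -- agree on all of V
      ext v
      have hv : v ∈ (k ∙ x) ⊔ W := hc.sup_eq_top ▸ Submodule.mem_top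
      obtain ⟨a, b, hab⟩ := Submodule.mem_sup'.mp hv
      obtain ⟨c, hc'⟩ := Submodule.mem_span_singleton.mp a.2
      have hb' : σ' (b : V) = (((l'.map (quadraticReflection Q')).prod b : W) : V) := by
        rw [← hρ b]
        exact congrArg _ (DFunLike.congr_fun hl'P b)
      rw [← hab, ← hc']
      simp only [LinearEquiv.coe_coe, map_add, _root_.map_smul]
      rw [hfix, hb', hmx, hmW b]
    -- now reduce the general case to key2
    have hkey : Q (σ x - x) ≠ 0 ∨ Q (σ x + x) ≠ 0 := by
      by_contra hcon
      push_neg at hcon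
      obtain ⟨h1, h2⟩ := hcon
      have e1 : Q (σ x + x) = Q (σ x) + Q x + polar Q (σ x) x := map_add' Q _ _
      have e2 : Q (σ x - x) = Q (σ x) + Q x - polar Q (σ x) x := by
        rw [sub_eq_add_neg, map_add' Q _ _, QuadraticMap.map_neg, polar_neg_right]
        ring
      have h4 : (2 * 2) * Q x = 0 := by
        have h3 := congrArg₂ (· + ·) h2 h1
        simp only [e1, e2, hσ, add_zero] at h3
        rw [← h3]; ring
      rcases mul_eq_zero.mp h4 with h | h
      · exact mul_ne_zero hchar hchar h
      · exact hx h
    rcases hkey with hz | hz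
    · -- case A : the reflection in z := σ x - x sends σ x to x
      set z := σ x - x with hzdef
      have hQz : Q z = Q (σ x) + Q x - polar Q (σ x) x := by
        rw [hzdef, sub_eq_add_neg, map_add' Q _ _, QuadraticMap.map_neg, polar_neg_right]
        ring
      have hpz : polar Q (σ x) z = Q z := by
        rw [hQz, hzdef, polar_sub_right, polar_self, two_nsmul, hσ]
      have hrefl : quadraticReflection Q z (σ x) = x := by
        rw [qr_apply, hpz, inv_mul_cancel₀ hz, one_smul, hzdef]
        abel
      set σ'' : V ≃ₗ[k] V := σ.trans (qrEquiv Q hz) with hσ''def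
      have hσ''iso : ∀ y, Q (σ'' y) = Q y := by
        intro y
        show Q (quadraticReflection Q z (σ y)) = Q y
        rw [qr_isometry Q hz, hσ]
      have hσ''x : σ'' x = x := hrefl
      obtain ⟨l, hlA, hlP⟩ := key2 σ'' hσ''iso hσ''x
      refine ⟨z :: l, ?_, ?_⟩
      · intro y hy
        rcases List.mem_cons.mp hy with rfl | hy
        · exact hz
        · exact hlA y hy
      · ext v
        simp only [List.map_cons, List.prod_cons, Module.End.mul_apply, ← hlP]
        show σ v = quadraticReflection Q z (quadraticReflection Q z (σ v))
        exact (qr_invol_apply Q hz _).symm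
    · -- case B : two reflections send σ x to x
      set z := σ x + x with hzdef
      have hQz : Q z = Q (σ x) + Q x + polar Q (σ x) x := by
        rw [hzdef]; exact map_add' Q _ _
      have hpz : polar Q (σ x) z = Q z := by
        rw [hQz, hzdef, polar_add_right, polar_self, two_nsmul, hσ]
      have hrefl : quadraticReflection Q z (σ x) = -x := by
        rw [qr_apply, hpz, inv_mul_cancel₀ hz, one_smul, hzdef]
        abel
      set σ'' : V ≃ₗ[k] V := (σ.trans (qrEquiv Q hz)).trans (qrEquiv Q hx) with hσ''def
      have hσ''iso : ∀ y, Q (σ'' y) = Q y := by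
        intro y
        show Q (quadraticReflection Q x (quadraticReflection Q z (σ y))) = Q y
        rw [qr_isometry Q hx, qr_isometry Q hz, hσ]
      have hσ''x : σ'' x = x := by
        show quadraticReflection Q x (quadraticReflection Q z (σ x)) = x
        rw [hrefl, _root_.map_neg, qr_self Q hx, neg_neg]
      obtain ⟨l, hlA, hlP⟩ := key2 σ'' hσ''iso hσ''x
      refine ⟨z :: x :: l, ?_, ?_⟩
      · intro y hy
        rcases List.mem_cons.mp hy with rfl | hy
        · exact hz
        rcases List.mem_cons.mp hy with rfl | hy
        · exact hx
        · exact hlA y hy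
      · ext v
        simp only [List.map_cons, List.prod_cons, Module.End.mul_apply, ← hlP]
        show σ v = quadraticReflection Q z (quadraticReflection Q x
          (quadraticReflection Q x (quadraticReflection Q z (σ v))))
        rw [qr_invol_apply Q hx, qr_invol_apply Q hz]

end CartanAux

/-- Cartan–Dieudonné: over a field of characteristic `≠ 2`, every isometry of a
finite-dimensional nondegenerate quadratic space is a composition of finitely many
reflections; it can be written as a composition of an even number of reflections if and
only if its determinant is `1`. -/
theorem cartan_dieudonne {k V : Type*} [Field k] [AddCommGroup V] [Module k V]
    [FiniteDimensional k V]
    (hchar : (2 : k) ≠ 0)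
    (Q : QuadraticForm k V)
    (hnd : (QuadraticMap.polarBilin Q).Nondegenerate)
    (σ : V ≃ₗ[k] V) (hσ : ∀ x, Q (σ x) = Q x) :
    (∃ l : List V, (∀ x ∈ l, Q x ≠ 0) ∧
      (σ : V →ₗ[k] V) = (l.map (quadraticReflection Q)).prod) ∧
    ((∃ l : List V, (∀ x ∈ l, Q x ≠ 0) ∧ Even l.length ∧
        (σ : V →ₗ[k] V) = (l.map (quadraticReflection Q)).prod) ↔
      LinearMap.det (σ : V →ₗ[k] V) = 1) := by
  obtain ⟨l, hlA, hlP⟩ :=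
    CartanAux.exists_list hchar (Module.finrank k V) V Q hnd σ hσ le_rfl
  have hdet : ∀ m : List V, (∀ x ∈ m, Q x ≠ 0) →
      (σ : V →ₗ[k] V) = (m.map (quadraticReflection Q)).prod →
      LinearMap.det (σ : V →ₗ[k] V) = (-1)^m.length := by
    intro m hm hP
    rw [hP]
    exact CartanAux.prod_det Q hchar m hm
  refine ⟨⟨l, hlA, hlP⟩, ?_, ?_⟩
  · rintro ⟨m, hmA, hmE, hmP⟩
    rw [hdet m hmA hmP]
    exact hmE.neg_one_pow
  · intro h1
    refine ⟨l, hlA, ?_, hlP⟩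
    have h2 := hdet l hlA hlP
    rw [h1] at h2
    have hne : (-1 : k) ≠ 1 := by
      intro h
      apply hchar
      linear_combination -h
    exact (neg_one_pow_eq_one_iff_even hne).mp h2.symm
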